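/- Let d ≥ 1. There exists α₀ > d, depending only on d, such that for every δ ∈ (0,1) there exists ε > 0, depending only on δ and d, with the following property: for every α ≥ α₀ and every pair (φ,ψ) ∈ B_α satisfying max_{x∈φ} D(x,ψ)^α < 1 − δ, the Lebesgue measure of ⋃_{x∈φ} B_{D(x,ψ)}(x) is at least (1+ε)·κ_d. -/

import Mathlib

open Metric Set MeasureTheory ENNReal

noncomputable def nnDist (d : ℕ) (ψ : Finset (EuclideanSpace ℝ (Fin d)))
    (x : EuclideanSpace ℝ (Fin d)) : ℝ :=
  Metric.infDist x ((↑ψ : Set (EuclideanSpace ℝ (Fin d))) \ {x})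

def Generic (d : ℕ) (ψ : Finset (EuclideanSpace ℝ (Fin d))) : Prop :=
  ∀ w ∈ ψ, ∀ x ∈ ψ, ∀ y ∈ ψ, ∀ z ∈ ψ,
    dist w x = dist y z → 0 < dist w x → ({w, x} : Set (EuclideanSpace ℝ (Fin d))) = {y, z}

noncomputable def memB (d : ℕ) (α : ℝ) (φ ψ : Finset (EuclideanSpace ℝ (Fin d))) : Prop :=
  φ ⊆ ψ ∧ 2 ≤ ψ.card ∧ Generic d ψ ∧ 1 ≤ ∑ x ∈ φ, nnDist d ψ x ^ α

open scoped RealInnerProductSpace Pointwise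

lemma aux_hyperplane_null {d : ℕ} (c e : EuclideanSpace ℝ (Fin d)) (he : e ≠ 0) :
    volume {z : EuclideanSpace ℝ (Fin d) | ⟪z - c, e⟫ = 0} = 0 := by
  have hs : AffineSubspace.mk' c (LinearMap.ker (innerSL ℝ e : EuclideanSpace ℝ (Fin d) →ₗ[ℝ] ℝ)) ≠
      (⊤ : AffineSubspace ℝ (EuclideanSpace ℝ (Fin d))) := by
    intro h
    have hmem : c + e ∈ AffineSubspace.mk' c (LinearMap.ker (innerSL ℝ e : EuclideanSpace ℝ (Fin d) →ₗ[ℝ] ℝ)) := h ▸ trivial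
    rw [AffineSubspace.mem_mk'] at hmem
    have h2 : (c + e) -ᵥ c = e := by simp [vsub_eq_sub]
    rw [h2, LinearMap.mem_ker] at hmem
    have : ⟪e, e⟫ = 0 := hmem
    exact he (inner_self_eq_zero.mp this)
  have h0 := Measure.addHaar_affineSubspace (volume) _ hs
  convert h0 using 2
  ext z
  rw [Set.mem_setOf_eq, SetLike.mem_coe, AffineSubspace.mem_mk', LinearMap.mem_ker]
  have : (innerSL ℝ e : EuclideanSpace ℝ (Fin d) →ₗ[ℝ] ℝ) (z -ᵥ c) = ⟪e, z - c⟫ := rfl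
  rw [this, real_inner_comm]

lemma aux_half {d : ℕ} (c e : EuclideanSpace ℝ (Fin d)) (he : e ≠ 0) (R : ℝ) :
    volume (ball c R) ≤
      2 * volume (ball c R ∩ {z : EuclideanSpace ℝ (Fin d) | 0 < ⟪z - c, e⟫}) := by
  set Hp := ball c R ∩ {z : EuclideanSpace ℝ (Fin d) | 0 < ⟪z - c, e⟫} with hHp
  set Hm := ball c R ∩ {z : EuclideanSpace ℝ (Fin d) | ⟪z - c, e⟫ < 0} with hHm
  set Z := {z : EuclideanSpace ℝ (Fin d) | ⟪z - c, e⟫ = 0} with hZdef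
  have hcover : ball c R ⊆ Hp ∪ (Hm ∪ Z) := by
    intro z hz
    rcases lt_trichotomy (⟪z - c, e⟫) 0 with h | h | h
    · exact Or.inr (Or.inl ⟨hz, h⟩)
    · exact Or.inr (Or.inr h)
    · exact Or.inl ⟨hz, h⟩
  have hZ : volume Z = 0 := aux_hyperplane_null c e he
  have hneg : ∀ S : Set (EuclideanSpace ℝ (Fin d)),
      volume ((fun z => -z) ⁻¹' S) = volume S := by
    intro S
    have hset : (fun z : EuclideanSpace ℝ (Fin d) => -z) ⁻¹' S = (-1 : ℝ) • S := by
      ext z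
      constructor
      · intro hz
        exact ⟨-z, hz, by simp⟩
      · rintro ⟨w, hw, rfl⟩
        simpa using hw
    rw [hset, Measure.addHaar_smul]
    simp
  have hmeq : Hm = (fun z : EuclideanSpace ℝ (Fin d) => -z) ⁻¹'
      ((fun z : EuclideanSpace ℝ (Fin d) => (c + c) + z) ⁻¹' Hp) := by
    ext z
    have h1 : (c + c + -z) - c = -(z - c) := by abel
    simp only [Set.mem_preimage, hHp, hHm, Set.mem_inter_iff, mem_ball, Set.mem_setOf_eq,
      dist_eq_norm, h1, norm_neg, inner_neg_left, neg_pos]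
  have hmvol : volume Hm = volume Hp := by
    rw [hmeq, hneg, measure_preimage_add]
  calc volume (ball c R) ≤ volume (Hp ∪ (Hm ∪ Z)) := measure_mono hcover
    _ ≤ volume Hp + volume (Hm ∪ Z) := measure_union_le _ _
    _ ≤ volume Hp + (volume Hm + volume Z) := add_le_add_right (measure_union_le _ _) _
    _ = volume Hp + volume Hp := by rw [hZ, hmvol, add_zero]
    _ = 2 * volume Hp := (two_mul _).symm

lemma aux_disj {d : ℕ} (x1 x : EuclideanSpace ℝ (Fin d)) (r1 ρ : ℝ) (h0 : 0 ≤ r1)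
    (hdist : r1 ≤ dist x1 x) :
    Disjoint (closedBall x1 r1)
      (ball x ρ ∩ {z : EuclideanSpace ℝ (Fin d) | 0 < ⟪z - x, x - x1⟫}) := by
  rw [Set.disjoint_left]
  rintro z hz ⟨-, hpos⟩
  rw [Set.mem_setOf_eq] at hpos
  have hnorm : ‖z - x1‖ ^ 2 = ‖z - x‖ ^ 2 + 2 * ⟪z - x, x - x1⟫ + ‖x - x1‖ ^ 2 := by
    rw [show z - x1 = (z - x) + (x - x1) by abel]
    exact norm_add_sq_real _ _
  have h1 : r1 ^ 2 ≤ ‖x - x1‖ ^ 2 := by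
    have hb : r1 ≤ ‖x - x1‖ := by rwa [← dist_eq_norm, dist_comm]
    exact pow_le_pow_left₀ h0 hb 2
  have h2 : r1 ^ 2 < ‖z - x1‖ ^ 2 := by nlinarith [sq_nonneg ‖z - x‖]
  have h3 : r1 < ‖z - x1‖ := lt_of_pow_lt_pow_left₀ 2 (norm_nonneg _) h2
  have h4 := mem_closedBall.mp hz
  rw [dist_eq_norm] at h4
  linarith

lemma aux_vol_closedBall {d : ℕ} (x : EuclideanSpace ℝ (Fin d)) {r : ℝ} (hr : 0 ≤ r) :
    volume (closedBall x r) = ENNReal.ofReal (r ^ (d : ℝ)) *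
      volume (closedBall (0 : EuclideanSpace ℝ (Fin d)) 1) := by
  rw [Measure.addHaar_closedBall' volume x hr, finrank_euclideanSpace_fin,
    ← Real.rpow_natCast r d]

lemma aux_vol_ball {d : ℕ} (hd : 0 < d) (x : EuclideanSpace ℝ (Fin d)) {r : ℝ} (hr : 0 ≤ r) :
    volume (ball x r) = ENNReal.ofReal (r ^ (d : ℝ)) *
      volume (closedBall (0 : EuclideanSpace ℝ (Fin d)) 1) := by
  haveI : Nonempty (Fin d) := ⟨⟨0, hd⟩⟩
  rw [Measure.addHaar_ball volume x hr, ← Measure.addHaar_closedBall_eq_addHaar_ball volume (0 : EuclideanSpace ℝ (Fin d)) 1,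
    finrank_euclideanSpace_fin, ← Real.rpow_natCast r d]

theorem stmt13 (d : ℕ) (hd : 0 < d) :
    ∃ α₀ : ℝ, (d : ℝ) < α₀ ∧
      ∀ δ : ℝ, 0 < δ → δ < 1 → ∃ ε : ℝ, 0 < ε ∧
        ∀ α : ℝ, α₀ ≤ α →
          ∀ φ ψ : Finset (EuclideanSpace ℝ (Fin d)), memB d α φ ψ →
            (∀ x ∈ φ, nnDist d ψ x ^ α < 1 - δ) →
            ENNReal.ofReal (1 + ε) * volume (closedBall (0 : EuclideanSpace ℝ (Fin d)) 1) ≤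
              volume (⋃ x ∈ φ, closedBall x (nnDist d ψ x)) := by
  classical
  refine ⟨((14 * d * (d + 2) : ℕ) : ℝ), ?_, ?_⟩
  · have h1 : d < 14 * d * (d + 2) := by
      calc d < 14 * d := by omega
        _ ≤ 14 * d * (d + 2) := Nat.le_mul_of_pos_right _ (by omega)
    exact_mod_cast h1
  intro δ hδ0 hδ1
  refine ⟨δ / 4, by linarith, ?_⟩
  intro α hα φ ψ hmem hmax
  obtain ⟨hφψ, hcard, hgen, hsum⟩ := hmem
  haveI : Nonempty (Fin d) := ⟨⟨0, hd⟩⟩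
  -- basic facts about α
  have hα0 : (0 : ℝ) < α := by
    have h1 : (0:ℝ) < ((14 * d * (d + 2) : ℕ) : ℝ) := by
      have : 0 < 14 * d * (d + 2) := by positivity
      exact_mod_cast this
    linarith
  have hdα : (d : ℝ) ≤ α := by
    have h1 : d ≤ 14 * d * (d + 2) := by nlinarith
    calc (d:ℝ) ≤ ((14 * d * (d + 2) : ℕ) : ℝ) := by exact_mod_cast h1
      _ ≤ α := hα
  have h2dα : 2 * (d : ℝ) ≤ α := by
    have h1 : 2 * d ≤ 14 * d * (d + 2) := by nlinarith
    calc (2:ℝ) * d = ((2 * d : ℕ) : ℝ) := by push_cast; ring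
      _ ≤ ((14 * d * (d + 2) : ℕ) : ℝ) := by exact_mod_cast h1
      _ ≤ α := hα
  set τ : ℝ := (1/2 : ℝ) ^ (2 * (d + 2)) with hτdef
  have hτ0 : 0 < τ := by positivity
  have hτ1 : τ ≤ 1 := by
    apply pow_le_one₀ <;> norm_num
  set r : EuclideanSpace ℝ (Fin d) → ℝ := fun x => nnDist d ψ x with hrdef
  have hr0 : ∀ x, 0 ≤ r x := fun x => Metric.infDist_nonneg
  have hr1 : ∀ x ∈ φ, r x ≤ 1 := by
    intro x hx
    by_contra h
    push_neg at h
    have h2 : (1:ℝ) < r x ^ α := by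
      calc (1:ℝ) = 1 ^ α := (Real.one_rpow α).symm
        _ < r x ^ α := Real.rpow_lt_rpow (by norm_num) h hα0
    have h3 := hmax x hx
    change r x ^ α < 1 - δ at h3
    linarith
  -- (i)
  have hrd : ∀ x ∈ φ, r x ^ α ≤ r x ^ (d:ℝ) := by
    intro x hx
    rcases eq_or_lt_of_le (hr0 x) with h0 | h0
    · rw [← h0, Real.zero_rpow (ne_of_gt hα0),
        Real.zero_rpow (by exact_mod_cast hd.ne' : (d:ℝ) ≠ 0)]
    · exact Real.rpow_le_rpow_of_exponent_ge h0 (hr1 x hx) hdα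
  -- (ii) tiny boost
  have htiny_boost : ∀ x ∈ φ, r x ^ α ≤ τ → 2^(d+2) * (r x ^ α) ≤ r x ^ (d:ℝ) := by
    intro x hx ht
    rcases eq_or_lt_of_le (hr0 x) with h0 | h0
    · rw [← h0, Real.zero_rpow (ne_of_gt hα0),
        Real.zero_rpow (by exact_mod_cast hd.ne' : (d:ℝ) ≠ 0)]
      simp
    · have key : (2:ℝ)^(d+2) * r x ^ (α - (d:ℝ)) ≤ 1 := by
        have e1 : r x ^ (α - (d:ℝ)) = (r x ^ α) ^ ((α - (d:ℝ))/α) := by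
          rw [← Real.rpow_mul h0.le]
          congr 1
          field_simp
        have e2 : (r x ^ α) ^ ((α - (d:ℝ))/α) ≤ τ ^ ((α - (d:ℝ))/α) :=
          Real.rpow_le_rpow (Real.rpow_nonneg (hr0 x) α) ht
            (div_nonneg (by linarith) hα0.le)
        have e3 : τ ^ ((α - (d:ℝ))/α) ≤ τ ^ (1/2 : ℝ) :=
          Real.rpow_le_rpow_of_exponent_ge hτ0 hτ1
            (by rw [le_div_iff₀ hα0]; linarith)
        have e4 : τ ^ (1/2:ℝ) = (1/2:ℝ)^(d+2) := by
          rw [hτdef, ← Real.rpow_natCast (1/2:ℝ) (2*(d+2)), ← Real.rpow_mul (by norm_num),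
            ← Real.rpow_natCast (1/2:ℝ) (d+2)]
          congr 1
          push_cast
          ring
        have e5 : r x ^ (α - (d:ℝ)) ≤ (1/2:ℝ)^(d+2) := by
          rw [e1]
          calc (r x ^ α) ^ ((α - (d:ℝ))/α) ≤ τ ^ ((α - (d:ℝ))/α) := e2
            _ ≤ τ ^ (1/2:ℝ) := e3
            _ = (1/2:ℝ)^(d+2) := e4
        calc (2:ℝ)^(d+2) * r x ^ (α - (d:ℝ)) ≤ 2^(d+2) * ((1/2:ℝ)^(d+2)) := by
              exact mul_le_mul_of_nonneg_left e5 (by positivity)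
          _ = 1 := by
              rw [one_div, inv_pow, mul_inv_cancel₀ (by positivity)]
      have esplit : r x ^ α = r x ^ (d:ℝ) * r x ^ (α - (d:ℝ)) := by
        rw [← Real.rpow_add h0]
        congr 1
        ring
      calc 2^(d+2) * (r x ^ α) = r x ^ (d:ℝ) * ((2:ℝ)^(d+2) * r x ^ (α - (d:ℝ))) := by
            rw [esplit]; ring
        _ ≤ r x ^ (d:ℝ) * 1 :=
            mul_le_mul_of_nonneg_left key (Real.rpow_nonneg (hr0 x) _)
        _ = r x ^ (d:ℝ) := mul_one _
  -- (iii) big boost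
  have hbig_boost : ∀ x ∈ φ, τ ≤ r x ^ α → (9/10 : ℝ) ≤ r x ^ (d:ℝ) := by
    intro x hx ht
    have h0 : 0 < r x := by
      rcases eq_or_lt_of_le (hr0 x) with h0 | h0
      · exfalso
        rw [← h0, Real.zero_rpow (ne_of_gt hα0)] at ht
        linarith
      · exact h0
    have e1 : r x ^ (d:ℝ) = (r x ^ α) ^ ((d:ℝ)/α) := by
      rw [← Real.rpow_mul h0.le]
      congr 1
      field_simp
    have e2 : τ ^ ((d:ℝ)/α) ≤ (r x ^ α) ^ ((d:ℝ)/α) :=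
      Real.rpow_le_rpow hτ0.le ht (by positivity)
    have e3 : (1/2:ℝ) ^ ((1:ℝ)/7) ≤ τ ^ ((d:ℝ)/α) := by
      have heq : τ ^ ((d:ℝ)/α) = (1/2:ℝ) ^ (((2*(d+2) : ℕ) : ℝ) * ((d:ℝ)/α)) := by
        rw [hτdef, ← Real.rpow_natCast (1/2:ℝ) (2*(d+2)), ← Real.rpow_mul (by norm_num)]
      rw [heq]
      apply Real.rpow_le_rpow_of_exponent_ge (by norm_num) (by norm_num)
      have hcast : ((14 * d * (d + 2) : ℕ) : ℝ) ≤ α := hα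
      push_cast at hcast
      rw [mul_div_assoc']
      rw [div_le_div_iff₀ hα0 (by norm_num : (0:ℝ) < 7)]
      push_cast
      nlinarith
    have e4 : (9/10:ℝ) ≤ (1/2:ℝ) ^ ((1:ℝ)/7) := by
      have h1 : ((9/10:ℝ)) ^ (7:ℕ) ≤ ((1/2:ℝ) ^ ((1:ℝ)/7)) ^ (7:ℕ) := by
        rw [← Real.rpow_natCast ((1/2:ℝ) ^ ((1:ℝ)/7)) 7, ← Real.rpow_mul (by norm_num)]
        rw [show (1:ℝ)/7 * ((7:ℕ):ℝ) = 1 by norm_num, Real.rpow_one]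
        norm_num
      exact le_of_pow_le_pow_left₀ (by norm_num) (by positivity) h1
    calc (9/10:ℝ) ≤ (1/2:ℝ) ^ ((1:ℝ)/7) := e4
      _ ≤ τ ^ ((d:ℝ)/α) := e3
      _ ≤ (r x ^ α) ^ ((d:ℝ)/α) := e2
      _ = r x ^ (d:ℝ) := e1.symm
  -- distances
  have hdist : ∀ x ∈ φ, ∀ y ∈ ψ, y ≠ x → r x ≤ dist x y := by
    intro x hx y hy hne
    apply Metric.infDist_le_dist_of_mem
    exact ⟨Finset.mem_coe.mpr hy, by simp [hne]⟩
  have hφne : φ.Nonempty := by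
    rcases φ.eq_empty_or_nonempty with h | h
    · exfalso
      rw [h, Finset.sum_empty] at hsum
      linarith
    · exact h
  set κ := volume (closedBall (0 : EuclideanSpace ℝ (Fin d)) 1) with hκdef
  set U := ⋃ x ∈ φ, closedBall x (r x) with hUdef
  -- reduce goal: it suffices to bound 2 * (...) ≤ 2 * volume U
  have hmain : ENNReal.ofReal (2 * (1 + δ/4)) * κ ≤ 2 * volume U := by
    by_cases hB : ∃ x ∈ φ, ∃ y ∈ φ, x ≠ y ∧ τ ≤ r x ^ α ∧ τ ≤ r y ^ α
    · -- two big balls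
      obtain ⟨x1, hx1, x2, hx2, hne, hb1, hb2⟩ := hB
      have hb1' := hbig_boost x1 hx1 hb1
      have hb2' := hbig_boost x2 hx2 hb2
      have he : x2 - x1 ≠ 0 := sub_ne_zero.mpr (Ne.symm hne)
      set Hh := ball x2 (r x2) ∩ {z : EuclideanSpace ℝ (Fin d) | 0 < ⟪z - x2, x2 - x1⟫} with hHh
      have hHm : MeasurableSet Hh :=
        measurableSet_ball.inter
          (isOpen_lt continuous_const
            ((continuous_id.sub continuous_const).inner continuous_const)).measurableSet
      have hd12 : r x1 ≤ dist x1 x2 := hdist x1 hx1 x2 (hφψ hx2) (Ne.symm hne)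
      have hdisj : Disjoint (closedBall x1 (r x1)) Hh :=
        aux_disj x1 x2 (r x1) (r x2) (hr0 x1) hd12
      have hsub : closedBall x1 (r x1) ∪ Hh ⊆ U := by
        apply Set.union_subset
        · show closedBall x1 (r x1) ⊆ ⋃ x ∈ φ, closedBall x (r x)
          exact Set.subset_iUnion₂ (s := fun x _ => closedBall x (r x)) x1 hx1
        · show Hh ⊆ ⋃ x ∈ φ, closedBall x (r x)
          refine Set.Subset.trans ?_ (Set.subset_iUnion₂ x2 hx2)
          exact Set.Subset.trans Set.inter_subset_left ball_subset_closedBall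
      have hkey : volume (closedBall x1 (r x1)) + volume Hh ≤ volume U := by
        rw [← measure_union hdisj hHm]
        exact measure_mono hsub
      calc ENNReal.ofReal (2 * (1 + δ/4)) * κ
          ≤ ENNReal.ofReal (r x1 ^ (d:ℝ) + r x1 ^ (d:ℝ) + r x2 ^ (d:ℝ)) * κ := by
            apply mul_le_mul_left
            apply ENNReal.ofReal_le_ofReal
            linarith
        _ = (ENNReal.ofReal (r x1 ^ (d:ℝ)) + ENNReal.ofReal (r x1 ^ (d:ℝ)) +
              ENNReal.ofReal (r x2 ^ (d:ℝ))) * κ := by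
            rw [ENNReal.ofReal_add
                (add_nonneg (Real.rpow_nonneg (hr0 x1) _) (Real.rpow_nonneg (hr0 x1) _))
                (Real.rpow_nonneg (hr0 x2) _),
              ENNReal.ofReal_add (Real.rpow_nonneg (hr0 x1) _) (Real.rpow_nonneg (hr0 x1) _)]
        _ = volume (closedBall x1 (r x1)) + volume (closedBall x1 (r x1)) +
              volume (ball x2 (r x2)) := by
            rw [add_mul, add_mul, aux_vol_closedBall x1 (hr0 x1), aux_vol_ball hd x2 (hr0 x2)]
        _ ≤ volume (closedBall x1 (r x1)) + volume (closedBall x1 (r x1)) + 2 * volume Hh := by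
            exact add_le_add_right (aux_half x2 (x2 - x1) he (r x2)) _
        _ = 2 * (volume (closedBall x1 (r x1)) + volume Hh) := by ring
        _ ≤ 2 * volume U := mul_le_mul_right hkey 2
    · -- at most one big ball
      have hex : ∃ x1 ∈ φ, ∀ x ∈ φ, x ≠ x1 → r x ^ α < τ := by
        by_cases hbig1 : ∃ b ∈ φ, τ ≤ r b ^ α
        · obtain ⟨b, hb, hbt⟩ := hbig1
          refine ⟨b, hb, ?_⟩
          intro x hx hxb
          by_contra h
          push_neg at h
          exact hB ⟨b, hb, x, hx, Ne.symm hxb, hbt, h⟩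
        · push_neg at hbig1
          obtain ⟨x0, hx0⟩ := hφne
          exact ⟨x0, hx0, fun x hx _ => hbig1 x hx⟩
      obtain ⟨x1, hx1, htiny⟩ := hex
      set s := φ.erase x1 with hsdef
      set C : EuclideanSpace ℝ (Fin d) → Set (EuclideanSpace ℝ (Fin d)) :=
        fun x => ball x (r x / 2) ∩ {z : EuclideanSpace ℝ (Fin d) | 0 < ⟪z - x, x - x1⟫}
        with hCdef
      have hCmeas : ∀ x, MeasurableSet (C x) := by
        intro x
        exact measurableSet_ball.inter
          (isOpen_lt continuous_const
            ((continuous_id.sub continuous_const).inner continuous_const)).measurableSet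
      have hpair : (↑s : Set (EuclideanSpace ℝ (Fin d))).PairwiseDisjoint C := by
        intro a ha b hb hab
        have haφ : a ∈ φ := Finset.mem_of_mem_erase (Finset.mem_coe.mp ha)
        have hbφ : b ∈ φ := Finset.mem_of_mem_erase (Finset.mem_coe.mp hb)
        have hab1 : r a ≤ dist a b := hdist a haφ b (hφψ hbφ) (Ne.symm hab)
        have hab2 : r b ≤ dist a b := by
          rw [dist_comm]
          exact hdist b hbφ a (hφψ haφ) hab
        rw [Function.onFun, Set.disjoint_left]
        rintro z ⟨hza, -⟩ ⟨hzb, -⟩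
        have t1 : dist a b ≤ dist a z + dist z b := dist_triangle a z b
        have t2 : dist a z < r a / 2 := by rw [dist_comm]; exact mem_ball.mp hza
        have t3 : dist z b < r b / 2 := mem_ball.mp hzb
        linarith
      have hdisjA : Disjoint (closedBall x1 (r x1)) (⋃ x ∈ s, C x) := by
        apply Set.disjoint_iUnion_right.mpr
        intro x
        apply Set.disjoint_iUnion_right.mpr
        intro hx
        have hxs := Finset.mem_erase.mp hx
        exact aux_disj x1 x (r x1) (r x / 2) (hr0 x1)
          (hdist x1 hx1 x (hφψ hxs.2) hxs.1)
      have hkey : volume (closedBall x1 (r x1)) + ∑ x ∈ s, volume (C x) ≤ volume U := by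
        have hm : MeasurableSet (⋃ x ∈ s, C x) :=
          s.measurableSet_biUnion (fun x _ => hCmeas x)
        rw [← measure_biUnion_finset hpair (fun x _ => hCmeas x), ← measure_union hdisjA hm]
        apply measure_mono
        apply Set.union_subset
        · show closedBall x1 (r x1) ⊆ ⋃ x ∈ φ, closedBall x (r x)
          exact Set.subset_iUnion₂ (s := fun x _ => closedBall x (r x)) x1 hx1
        · show (⋃ x ∈ s, C x) ⊆ ⋃ x ∈ φ, closedBall x (r x)
          apply Set.iUnion₂_subset
          intro x hx
          have hxs := Finset.mem_erase.mp hx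
          refine Set.Subset.trans Set.inter_subset_left ?_
          refine Set.Subset.trans ?_ (Set.subset_iUnion₂ x hxs.2)
          exact Set.Subset.trans (ball_subset_ball (by linarith [hr0 x])) ball_subset_closedBall
      -- per-element bound in ℝ≥0∞
      have hsum_le : ∀ x ∈ s, ENNReal.ofReal ((r x / 2) ^ (d:ℝ)) * κ ≤ 2 * volume (C x) := by
        intro x hx
        have hxs := Finset.mem_erase.mp hx
        rw [← aux_vol_ball hd x (by linarith [hr0 x] : (0:ℝ) ≤ r x / 2)]
        exact aux_half x (x - x1) (sub_ne_zero.mpr hxs.1) (r x / 2)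
      -- real inequality
      have hreal : 2 * (1 + δ/4) ≤ r x1 ^ (d:ℝ) + r x1 ^ (d:ℝ) + ∑ x ∈ s, (r x / 2) ^ (d:ℝ) := by
        have per : ∀ x ∈ s, 4 * (r x ^ α) ≤ (r x / 2) ^ (d:ℝ) := by
          intro x hx
          have hxs := Finset.mem_erase.mp hx
          have hboost : 2^(d+2) * (r x ^ α) ≤ r x ^ (d:ℝ) :=
            htiny_boost x hxs.2 (htiny x hxs.2 hxs.1).le
          have hsplit : (r x / 2) ^ (d:ℝ) = r x ^ (d:ℝ) / 2 ^ d := by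
            rw [Real.div_rpow (hr0 x) (by norm_num), Real.rpow_natCast (2:ℝ) d]
          rw [hsplit, le_div_iff₀ (by positivity)]
          have h4 : (2:ℝ)^(d+2) = 4 * 2^d := by rw [pow_add]; ring
          rw [h4] at hboost
          nlinarith [Real.rpow_nonneg (hr0 x) α]
        have e1 : ∑ x ∈ s, 4 * (r x ^ α) ≤ ∑ x ∈ s, (r x / 2) ^ (d:ℝ) :=
          Finset.sum_le_sum per
        rw [← Finset.mul_sum] at e1
        have e2 : r x1 ^ α + ∑ x ∈ s, r x ^ α = ∑ x ∈ φ, r x ^ α :=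
          Finset.add_sum_erase φ (fun x => r x ^ α) hx1
        have hsum' : (1:ℝ) ≤ ∑ x ∈ φ, r x ^ α := hsum
        have e3 : 1 - r x1 ^ α ≤ ∑ x ∈ s, r x ^ α := by linarith
        have e4 := hrd x1 hx1
        have e5 := hmax x1 hx1
        change r x1 ^ α < 1 - δ at e5
        have e6 : (0:ℝ) ≤ r x1 ^ α := Real.rpow_nonneg (hr0 x1) α
        linarith
      calc ENNReal.ofReal (2 * (1 + δ/4)) * κ
          ≤ ENNReal.ofReal (r x1 ^ (d:ℝ) + r x1 ^ (d:ℝ) + ∑ x ∈ s, (r x / 2) ^ (d:ℝ)) * κ := by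
            apply mul_le_mul_left
            exact ENNReal.ofReal_le_ofReal hreal
        _ = ENNReal.ofReal (r x1 ^ (d:ℝ)) * κ + ENNReal.ofReal (r x1 ^ (d:ℝ)) * κ +
              ∑ x ∈ s, ENNReal.ofReal ((r x / 2) ^ (d:ℝ)) * κ := by
            rw [ENNReal.ofReal_add
                (add_nonneg (Real.rpow_nonneg (hr0 x1) _) (Real.rpow_nonneg (hr0 x1) _))
                (Finset.sum_nonneg (fun x _ =>
                  Real.rpow_nonneg (div_nonneg (hr0 x) (by norm_num)) _)),
              ENNReal.ofReal_add (Real.rpow_nonneg (hr0 x1) _) (Real.rpow_nonneg (hr0 x1) _),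
              ENNReal.ofReal_sum_of_nonneg (fun x _ =>
                Real.rpow_nonneg (div_nonneg (hr0 x) (by norm_num)) _),
              add_mul, add_mul, Finset.sum_mul]
        _ = volume (closedBall x1 (r x1)) + volume (closedBall x1 (r x1)) +
              ∑ x ∈ s, ENNReal.ofReal ((r x / 2) ^ (d:ℝ)) * κ := by
            rw [aux_vol_closedBall x1 (hr0 x1)]
        _ ≤ volume (closedBall x1 (r x1)) + volume (closedBall x1 (r x1)) +
              ∑ x ∈ s, 2 * volume (C x) := by
            exact add_le_add_right (Finset.sum_le_sum hsum_le) _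
        _ = 2 * (volume (closedBall x1 (r x1)) + ∑ x ∈ s, volume (C x)) := by
            rw [← Finset.mul_sum]
            ring
        _ ≤ 2 * volume U := mul_le_mul_right hkey 2
  -- conclude
  have h2 : ENNReal.ofReal (2 * (1 + δ/4)) = 2 * ENNReal.ofReal (1 + δ/4) := by
    rw [ENNReal.ofReal_mul (by norm_num : (0:ℝ) ≤ 2)]
    norm_num
  rw [h2, mul_assoc] at hmain
  exact (ENNReal.mul_le_mul_iff_right (by norm_num) (by norm_num)).mp hmain
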